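/- Let a : ℤ → ℝ vanish outside {0, 1, …, L_m − 1} for some positive integer L_m, and let (y_t)_{t∈ℤ} be independent real random variables with E y_t = 0 and E y_t⁴ ≤ K for all t, for some constant K. Define z_t = ∑_{i∈ℤ} ∑_{j>i} a_i a_j y_{t−i} y_{t−j}. Then for every positive integer T, E[ ( ∑_{t=1}^{T} z_t )² ] ≤ T · (2 L_m + 1) · K · ( ∑_{0≤i<j<L_m} |a_i a_j| )². In particular, (1/T) ∑_{t=1}^{T} z_t → 0 in L² as T → ∞. -/

import Mathlib

open MeasureTheory ProbabilityTheory Filter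

/-- For independent mean-zero random variables with uniformly bounded
fourth moments and a filter `a` supported in `{0,…,L_m-1}`, the statistic
`z_t = ∑_i ∑_{j>i} a_i a_j y_{t-i} y_{t-j}` satisfies
`E[(∑_{t=1}^T z_t)²] ≤ T (2 L_m + 1) K (∑_{0 ≤ i < j < L_m} |a_i a_j|)²`;
in particular `(1/T) ∑_{t=1}^T z_t → 0` in `L²` as `T → ∞`. -/
theorem stmt13 (Ω : Type) [MeasureSpace Ω] [IsProbabilityMeasure (ℙ : Measure Ω)]
    (Lm : ℕ) (hLm : 0 < Lm)
    (a : ℤ → ℝ) (hasupp : ∀ l : ℤ, (l < 0 ∨ (Lm : ℤ) ≤ l) → a l = 0)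
    (y : ℤ → Ω → ℝ) (hmeas : ∀ t : ℤ, Measurable (y t))
    (hind : iIndepFun y ℙ)
    (hL4 : ∀ t : ℤ, MemLp (y t) 4)
    (hmean : ∀ t : ℤ, ∫ ω, y t ω = 0)
    (K : ℝ) (hK : ∀ t : ℤ, ∫ ω, (y t ω) ^ 4 ≤ K) :
    (∀ T : ℕ, 0 < T →
      ∫ ω, (∑ t ∈ Finset.Icc (1 : ℤ) (T : ℤ), ∑ᶠ i : ℤ, ∑ᶠ j : ℤ,
          if i < j then a i * a j * y (t - i) ω * y (t - j) ω else 0) ^ 2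
        ≤ (T : ℝ) * (2 * (Lm : ℝ) + 1) * K
          * (∑ᶠ i : ℤ, ∑ᶠ j : ℤ,
              if 0 ≤ i ∧ i < j ∧ j < (Lm : ℤ) then |a i * a j| else 0) ^ 2)
    ∧ Tendsto (fun T : ℕ =>
        ∫ ω, ((1 / (T : ℝ)) * ∑ t ∈ Finset.Icc (1 : ℤ) (T : ℤ), ∑ᶠ i : ℤ, ∑ᶠ j : ℤ,
          if i < j then a i * a j * y (t - i) ω * y (t - j) ω else 0) ^ 2)
        atTop (nhds 0) := by
  classical
  -- basic objects
  set I : Finset ℤ := Finset.Ico (0 : ℤ) (Lm : ℤ) with hI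
  set P : Finset (ℤ × ℤ) := I ×ˢ I with hPdef
  set g : ℤ × ℤ → ℤ → Ω → ℝ := fun p t ω =>
    if p.1 < p.2 then a p.1 * a p.2 * y (t - p.1) ω * y (t - p.2) ω else 0 with hgdef
  set z : ℤ → Ω → ℝ := fun t ω => ∑ p ∈ P, g p t ω with hzdef
  set S : ℝ := ∑ p ∈ P, (if p.1 < p.2 then |a p.1 * a p.2| else 0) with hSdef
  have hK0 : 0 ≤ K := le_trans (integral_nonneg fun ω => by positivity) (hK 0)
  have hS0 : 0 ≤ S := Finset.sum_nonneg fun p _ => by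
    split_ifs; exacts [abs_nonneg _, le_refl 0]
  -- reduction of the finsums to finite sums
  have hz : ∀ (t : ℤ) (ω : Ω),
      (∑ᶠ i : ℤ, ∑ᶠ j : ℤ, if i < j then a i * a j * y (t - i) ω * y (t - j) ω else 0)
        = z t ω := by
    intro t ω
    have hinner : ∀ i : ℤ,
        (∑ᶠ j : ℤ, if i < j then a i * a j * y (t - i) ω * y (t - j) ω else 0)
          = ∑ j ∈ I, if i < j then a i * a j * y (t - i) ω * y (t - j) ω else 0 := by
      intro i
      refine finsum_eq_sum_of_support_subset _ ?_
      intro j hj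
      simp only [Function.mem_support, ne_eq] at hj
      by_contra hjI
      apply hj
      have : a j = 0 := hasupp j (by
        simp only [hI, Finset.coe_Ico, Set.mem_Ico] at hjI
        omega)
      simp [this]
    rw [finsum_congr hinner]
    rw [finsum_eq_sum_of_support_subset _ (s := I) ?side]
    case side =>
      intro i hi
      simp only [Function.mem_support, ne_eq] at hi
      by_contra hiI
      apply hi
      have : a i = 0 := hasupp i (by
        simp only [hI, Finset.coe_Ico, Set.mem_Ico] at hiI
        omega)
      exact Finset.sum_eq_zero fun j _ => by simp [this]
    exact (Finset.sum_product I I fun p => g p t ω).symm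
  have hS : (∑ᶠ i : ℤ, ∑ᶠ j : ℤ,
      if 0 ≤ i ∧ i < j ∧ j < (Lm : ℤ) then |a i * a j| else 0) = S := by
    have hinner : ∀ i : ℤ,
        (∑ᶠ j : ℤ, if 0 ≤ i ∧ i < j ∧ j < (Lm : ℤ) then |a i * a j| else 0)
          = ∑ j ∈ I, if 0 ≤ i ∧ i < j ∧ j < (Lm : ℤ) then |a i * a j| else 0 := by
      intro i
      refine finsum_eq_sum_of_support_subset _ ?_
      intro j hj
      simp only [Function.mem_support, ne_eq] at hj
      by_contra hjI
      apply hj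
      simp only [hI, Finset.coe_Ico, Set.mem_Ico] at hjI
      rw [if_neg]
      omega
    rw [finsum_congr hinner]
    rw [finsum_eq_sum_of_support_subset _ (s := I) ?side2]
    case side2 =>
      intro i hi
      simp only [Function.mem_support, ne_eq] at hi
      by_contra hiI
      apply hi
      simp only [hI, Finset.coe_Ico, Set.mem_Ico] at hiI
      refine Finset.sum_eq_zero fun j hj => ?_
      simp only [hI, Finset.mem_Ico] at hj
      rw [if_neg]
      omega
    rw [hSdef, hPdef, Finset.sum_product]
    refine Finset.sum_congr rfl fun i hi => Finset.sum_congr rfl fun j hj => ?_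
    simp only [hI, Finset.mem_Ico] at hi hj
    by_cases h : i < j
    · rw [if_pos h, if_pos ⟨hi.1, h, hj.2⟩]
    · rw [if_neg h, if_neg (by omega)]
  -- integrability of fourfold products
  have mem2 : ∀ s1 s2 : ℤ, MemLp (fun ω => y s1 ω * y s2 ω) 2 := by
    intro s1 s2
    have h := (hL4 s2).smul (hL4 s1)
      (p := 4) (q := 4) (r := 2)
      (hpqr := ⟨by simp only [← one_div]; rw [ENNReal.div_add_div_same]; rw [ENNReal.div_eq_div_iff] <;> norm_num⟩)
    exact h
  have int4 : ∀ s1 s2 s3 s4 : ℤ,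
      Integrable (fun ω => y s1 ω * y s2 ω * (y s3 ω * y s4 ω)) := by
    intro s1 s2 s3 s4
    have h := (mem2 s3 s4).smul (mem2 s1 s2)
      (p := 2) (q := 2) (r := 1)
      (hpqr := ⟨by simp only [← one_div]; rw [ENNReal.div_add_div_same]; rw [ENNReal.div_eq_div_iff] <;> norm_num⟩)
    exact memLp_one_iff_integrable.mp h
  have intpow4 : ∀ s : ℤ, Integrable (fun ω => (y s ω) ^ 4) := by
    intro s
    exact (int4 s s s s).congr (Filter.Eventually.of_forall fun ω => by ring)
  -- fourth-moment bound for products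
  have bound4 : ∀ s1 s2 s3 s4 : ℤ,
      |∫ ω, y s1 ω * y s2 ω * (y s3 ω * y s4 ω)| ≤ K := by
    intro s1 s2 s3 s4
    have h1 : |∫ ω, y s1 ω * y s2 ω * (y s3 ω * y s4 ω)|
        ≤ ∫ ω, |y s1 ω * y s2 ω * (y s3 ω * y s4 ω)| := by
      have h := norm_integral_le_integral_norm (μ := (ℙ : Measure Ω))
        (f := fun ω => y s1 ω * y s2 ω * (y s3 ω * y s4 ω))
      simp only [Real.norm_eq_abs] at h
      exact h
    refine h1.trans ?_
    have h2 : ∫ ω, |y s1 ω * y s2 ω * (y s3 ω * y s4 ω)|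
        ≤ ∫ ω, ((y s1 ω)^4 + (y s2 ω)^4 + (y s3 ω)^4 + (y s4 ω)^4)/4 := by
      refine integral_mono (int4 s1 s2 s3 s4).abs ?_ ?_
      · exact ((((intpow4 s1).add (intpow4 s2)).add (intpow4 s3)).add (intpow4 s4)).div_const 4
      · intro ω
        show |y s1 ω * y s2 ω * (y s3 ω * y s4 ω)|
          ≤ ((y s1 ω)^4 + (y s2 ω)^4 + (y s3 ω)^4 + (y s4 ω)^4)/4
        have habs : |y s1 ω * y s2 ω * (y s3 ω * y s4 ω)|
            = |y s1 ω * y s2 ω| * |y s3 ω * y s4 ω| := abs_mul _ _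
        rw [habs]
        nlinarith [sq_nonneg (|y s1 ω * y s2 ω| - |y s3 ω * y s4 ω|),
          sq_nonneg (y s1 ω ^ 2 - y s2 ω ^ 2), sq_nonneg (y s3 ω ^ 2 - y s4 ω ^ 2),
          abs_nonneg (y s1 ω * y s2 ω), abs_nonneg (y s3 ω * y s4 ω),
          sq_abs (y s1 ω * y s2 ω), sq_abs (y s3 ω * y s4 ω)]
    refine h2.trans ?_
    have h3 : ∫ ω, ((y s1 ω)^4 + (y s2 ω)^4 + (y s3 ω)^4 + (y s4 ω)^4)/4
        = ((∫ ω, (y s1 ω)^4) + (∫ ω, (y s2 ω)^4) + (∫ ω, (y s3 ω)^4) + (∫ ω, (y s4 ω)^4))/4 := by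
      have i12 : Integrable (fun ω => (y s1 ω)^4 + (y s2 ω)^4) := (intpow4 s1).add (intpow4 s2)
      have i123 : Integrable (fun ω => (y s1 ω)^4 + (y s2 ω)^4 + (y s3 ω)^4) :=
        i12.add (intpow4 s3)
      rw [integral_div, integral_add i123 (intpow4 s4), integral_add i12 (intpow4 s3),
        integral_add (intpow4 s1) (intpow4 s2)]
    rw [h3]
    have := hK s1; have := hK s2; have := hK s3; have := hK s4
    linarith
  -- vanishing of fourfold products with disjoint pairs
  have zero4 : ∀ s1 s2 s3 s4 : ℤ, s1 ≠ s2 → s1 ≠ s3 → s1 ≠ s4 → s2 ≠ s3 → s2 ≠ s4 →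
      ∫ ω, y s1 ω * y s2 ω * (y s3 ω * y s4 ω) = 0 := by
    intro s1 s2 s3 s4 h12 h13 h14 h23 h24
    have hmm := hind.indepFun_mul_mul hmeas s1 s2 s3 s4 h13 h14 h23 h24
    have hint := hmm.integral_mul_eq_mul_integral ((hmeas s1).mul (hmeas s2)).aestronglyMeasurable
      ((hmeas s3).mul (hmeas s4)).aestronglyMeasurable
    have h12' : ∫ ω, y s1 ω * y s2 ω = 0 := by
      have h := (hind.indepFun h12).integral_mul_eq_mul_integral (hmeas s1).aestronglyMeasurable
        (hmeas s2).aestronglyMeasurable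
      have : ∫ ω, y s1 ω * y s2 ω = (∫ ω, y s1 ω) * ∫ ω, y s2 ω := h
      rw [this, hmean s1, zero_mul]
    have : ∫ ω, y s1 ω * y s2 ω * (y s3 ω * y s4 ω)
        = (∫ ω, y s1 ω * y s2 ω) * ∫ ω, y s3 ω * y s4 ω := hint
    rw [this, h12', zero_mul]
  -- integrability of products of the g's
  have hg_int : ∀ (p q : ℤ × ℤ) (t t' : ℤ),
      Integrable (fun ω => g p t ω * g q t' ω) := by
    intro p q t t'
    by_cases h1 : p.1 < p.2
    · by_cases h2 : q.1 < q.2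
      · simp only [hgdef, if_pos h1, if_pos h2]
        have h := ((int4 (t - p.1) (t - p.2) (t' - q.1) (t' - q.2)).const_mul
          (a p.1 * a p.2 * (a q.1 * a q.2)))
        exact h.congr (Filter.Eventually.of_forall fun ω => by ring)
      · simp only [hgdef, if_pos h1, if_neg h2, mul_zero]
        exact integrable_const 0
    · simp only [hgdef, if_neg h1, zero_mul]
      exact integrable_const 0
  -- integrability of z t * z t'
  have hzz_eq : ∀ (t t' : ℤ) (ω : Ω),
      z t ω * z t' ω = ∑ p ∈ P, ∑ q ∈ P, g p t ω * g q t' ω := by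
    intro t t' ω
    rw [hzdef]
    exact Finset.sum_mul_sum P P _ _
  have hzz_int : ∀ t t' : ℤ, Integrable (fun ω => z t ω * z t' ω) := by
    intro t t'
    have : (fun ω => z t ω * z t' ω)
        = fun ω => ∑ p ∈ P, ∑ q ∈ P, g p t ω * g q t' ω := funext fun ω => hzz_eq t t' ω
    rw [this]
    exact integrable_finset_sum _ fun p _ => integrable_finset_sum _ fun q _ => hg_int p q t t'
  have key : ∀ t t' : ℤ,
      ∫ ω, z t ω * z t' ω = ∑ p ∈ P, ∑ q ∈ P, ∫ ω, g p t ω * g q t' ω := by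
    intro t t'
    have h1 : ∫ ω, z t ω * z t' ω = ∫ ω, ∑ p ∈ P, ∑ q ∈ P, g p t ω * g q t' ω := by
      congr 1; exact funext fun ω => hzz_eq t t' ω
    rw [h1, integral_finset_sum _ fun p _ => integrable_finset_sum _ fun q _ => hg_int p q t t']
    exact Finset.sum_congr rfl fun p _ =>
      integral_finset_sum _ fun q _ => hg_int p q t t'
  -- termwise bound
  have term_bound : ∀ (p q : ℤ × ℤ) (t t' : ℤ),
      ∫ ω, g p t ω * g q t' ω
        ≤ (if p.1 < p.2 then |a p.1 * a p.2| else 0)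
          * ((if q.1 < q.2 then |a q.1 * a q.2| else 0) * K) := by
    intro p q t t'
    by_cases h1 : p.1 < p.2
    · by_cases h2 : q.1 < q.2
      · simp only [hgdef, if_pos h1, if_pos h2]
        have heq : ∀ ω : Ω,
            a p.1 * a p.2 * y (t - p.1) ω * y (t - p.2) ω
              * (a q.1 * a q.2 * y (t' - q.1) ω * y (t' - q.2) ω)
            = (a p.1 * a p.2 * (a q.1 * a q.2))
              * (y (t - p.1) ω * y (t - p.2) ω * (y (t' - q.1) ω * y (t' - q.2) ω)) :=
          fun ω => by ring
        calc ∫ ω, a p.1 * a p.2 * y (t - p.1) ω * y (t - p.2) ω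
              * (a q.1 * a q.2 * y (t' - q.1) ω * y (t' - q.2) ω)
            = (a p.1 * a p.2 * (a q.1 * a q.2))
              * ∫ ω, y (t - p.1) ω * y (t - p.2) ω * (y (t' - q.1) ω * y (t' - q.2) ω) := by
              rw [← integral_const_mul]; congr 1; exact funext heq
          _ ≤ |(a p.1 * a p.2 * (a q.1 * a q.2))
              * ∫ ω, y (t - p.1) ω * y (t - p.2) ω * (y (t' - q.1) ω * y (t' - q.2) ω)| :=
              le_abs_self _
          _ = |a p.1 * a p.2 * (a q.1 * a q.2)|
              * |∫ ω, y (t - p.1) ω * y (t - p.2) ω * (y (t' - q.1) ω * y (t' - q.2) ω)| :=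
              abs_mul _ _
          _ ≤ |a p.1 * a p.2 * (a q.1 * a q.2)| * K :=
              mul_le_mul_of_nonneg_left (bound4 _ _ _ _) (abs_nonneg _)
          _ = |a p.1 * a p.2| * (|a q.1 * a q.2| * K) := by
              rw [abs_mul]; ring
      · simp only [hgdef, if_pos h1, if_neg h2, mul_zero, integral_zero, zero_mul]
        simp
    · simp only [hgdef, if_neg h1, zero_mul, integral_zero]
      simp
  -- vanishing covariance for distant times
  have cov_zero : ∀ t t' : ℤ, (Lm : ℤ) ≤ |t - t'| → ∫ ω, z t ω * z t' ω = 0 := by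
    intro t t' hdist
    rw [key]
    refine Finset.sum_eq_zero fun p hp => Finset.sum_eq_zero fun q hq => ?_
    have hp' := hp; have hq' := hq
    rw [hPdef, Finset.mem_product] at hp' hq'
    simp only [hI, Finset.mem_Ico] at hp' hq'
    obtain ⟨⟨hp11, hp12⟩, hp21, hp22⟩ := hp'
    obtain ⟨⟨hq11, hq12⟩, hq21, hq22⟩ := hq'
    have hdist' : (Lm : ℤ) ≤ t - t' ∨ (Lm : ℤ) ≤ t' - t := by
      rcases le_abs.mp hdist with h | h
      · exact Or.inl h
      · exact Or.inr (by omega)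
    by_cases h1 : p.1 < p.2
    · by_cases h2 : q.1 < q.2
      · simp only [hgdef, if_pos h1, if_pos h2]
        have heq : ∀ ω : Ω,
            a p.1 * a p.2 * y (t - p.1) ω * y (t - p.2) ω
              * (a q.1 * a q.2 * y (t' - q.1) ω * y (t' - q.2) ω)
            = (a p.1 * a p.2 * (a q.1 * a q.2))
              * (y (t - p.1) ω * y (t - p.2) ω * (y (t' - q.1) ω * y (t' - q.2) ω)) :=
          fun ω => by ring
        have : ∫ ω, a p.1 * a p.2 * y (t - p.1) ω * y (t - p.2) ω
              * (a q.1 * a q.2 * y (t' - q.1) ω * y (t' - q.2) ω)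
            = (a p.1 * a p.2 * (a q.1 * a q.2))
              * ∫ ω, y (t - p.1) ω * y (t - p.2) ω * (y (t' - q.1) ω * y (t' - q.2) ω) := by
          rw [← integral_const_mul]; congr 1; exact funext heq
        rw [this, zero4 _ _ _ _ (by omega) (by omega) (by omega) (by omega) (by omega), mul_zero]
      · simp [hgdef, if_neg h2]
    · simp [hgdef, if_neg h1]
  -- main quantitative bound
  have main : ∀ T : ℕ,
      ∫ ω, (∑ t ∈ Finset.Icc (1 : ℤ) (T : ℤ), z t ω) ^ 2
        ≤ (T : ℝ) * (2 * (Lm : ℝ) + 1) * K * S ^ 2 := by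
    intro T
    have hsq : ∀ ω : Ω, (∑ t ∈ Finset.Icc (1 : ℤ) (T : ℤ), z t ω) ^ 2
        = ∑ t ∈ Finset.Icc (1 : ℤ) (T : ℤ), ∑ t' ∈ Finset.Icc (1 : ℤ) (T : ℤ),
          z t ω * z t' ω := by
      intro ω
      rw [sq, Finset.sum_mul_sum]
    have hint : ∫ ω, (∑ t ∈ Finset.Icc (1 : ℤ) (T : ℤ), z t ω) ^ 2
        = ∑ t ∈ Finset.Icc (1 : ℤ) (T : ℤ), ∑ t' ∈ Finset.Icc (1 : ℤ) (T : ℤ),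
          ∫ ω, z t ω * z t' ω := by
      have h1 : ∫ ω, (∑ t ∈ Finset.Icc (1 : ℤ) (T : ℤ), z t ω) ^ 2
          = ∫ ω, ∑ t ∈ Finset.Icc (1 : ℤ) (T : ℤ), ∑ t' ∈ Finset.Icc (1 : ℤ) (T : ℤ),
            z t ω * z t' ω := by
        congr 1; exact funext hsq
      rw [h1, integral_finset_sum _ fun t _ => integrable_finset_sum _ fun t' _ => hzz_int t t']
      exact Finset.sum_congr rfl fun t _ =>
        integral_finset_sum _ fun t' _ => hzz_int t t'
    rw [hint]
    have hCnn : 0 ≤ S * (S * K) := mul_nonneg hS0 (mul_nonneg hS0 hK0)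
    have step1 : ∀ t t' : ℤ, ∫ ω, z t ω * z t' ω
        ≤ if |t - t'| < (Lm : ℤ) then S * (S * K) else 0 := by
      intro t t'
      by_cases h : |t - t'| < (Lm : ℤ)
      · rw [if_pos h, key]
        calc ∑ p ∈ P, ∑ q ∈ P, ∫ ω, g p t ω * g q t' ω
            ≤ ∑ p ∈ P, ∑ q ∈ P, (if p.1 < p.2 then |a p.1 * a p.2| else 0)
              * ((if q.1 < q.2 then |a q.1 * a q.2| else 0) * K) :=
            Finset.sum_le_sum fun p _ => Finset.sum_le_sum fun q _ => term_bound p q t t'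
          _ = S * (S * K) := by
            rw [hSdef, Finset.sum_mul, Finset.sum_mul]
            exact Finset.sum_congr rfl fun p _ => (Finset.mul_sum _ _ _).symm
      · rw [if_neg h, cov_zero t t' (not_lt.mp h)]
    calc ∑ t ∈ Finset.Icc (1 : ℤ) (T : ℤ), ∑ t' ∈ Finset.Icc (1 : ℤ) (T : ℤ),
          ∫ ω, z t ω * z t' ω
        ≤ ∑ t ∈ Finset.Icc (1 : ℤ) (T : ℤ), ∑ t' ∈ Finset.Icc (1 : ℤ) (T : ℤ),
          (if |t - t'| < (Lm : ℤ) then S * (S * K) else 0) :=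
          Finset.sum_le_sum fun t _ => Finset.sum_le_sum fun t' _ => step1 t t'
      _ ≤ ∑ t ∈ Finset.Icc (1 : ℤ) (T : ℤ), (2 * (Lm : ℝ) + 1) * (S * (S * K)) := by
          refine Finset.sum_le_sum fun t _ => ?_
          have hfil : ∑ t' ∈ Finset.Icc (1 : ℤ) (T : ℤ),
              (if |t - t'| < (Lm : ℤ) then S * (S * K) else 0)
              = ∑ t' ∈ (Finset.Icc (1 : ℤ) (T : ℤ)).filter
                  (fun t' => |t - t'| < (Lm : ℤ)), S * (S * K) := by
            rw [Finset.sum_filter]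
          rw [hfil, Finset.sum_const, nsmul_eq_mul]
          have hsub : (Finset.Icc (1 : ℤ) (T : ℤ)).filter (fun t' => |t - t'| < (Lm : ℤ))
              ⊆ Finset.Icc (t - (Lm : ℤ)) (t + (Lm : ℤ)) := by
            intro x hx
            simp only [Finset.mem_filter, Finset.mem_Icc] at hx ⊢
            rcases abs_lt.mp hx.2 with ⟨h1, h2⟩
            omega
          have hcard : ((Finset.Icc (1 : ℤ) (T : ℤ)).filter
              (fun t' => |t - t'| < (Lm : ℤ))).card ≤ 2 * Lm + 1 := by
            refine le_trans (Finset.card_le_card hsub) ?_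
            rw [Int.card_Icc]
            omega
          refine mul_le_mul_of_nonneg_right ?_ hCnn
          calc (((Finset.Icc (1 : ℤ) (T : ℤ)).filter
              (fun t' => |t - t'| < (Lm : ℤ))).card : ℝ) ≤ ((2 * Lm + 1 : ℕ) : ℝ) := by
                exact_mod_cast hcard
            _ = 2 * (Lm : ℝ) + 1 := by push_cast; ring
      _ = (T : ℝ) * (2 * (Lm : ℝ) + 1) * K * S ^ 2 := by
          rw [Finset.sum_const, Int.card_Icc, nsmul_eq_mul]
          have : ((T : ℤ) + 1 - 1).toNat = T := by omega
          rw [this]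
          ring
  constructor
  · intro T _
    simp_rw [hz, hS]
    exact main T
  · simp_rw [hz]
    have hfT : ∀ T : ℕ,
        ∫ ω, ((1 / (T : ℝ)) * ∑ t ∈ Finset.Icc (1 : ℤ) (T : ℤ), z t ω) ^ 2
          = (1 / (T : ℝ)) ^ 2 * ∫ ω, (∑ t ∈ Finset.Icc (1 : ℤ) (T : ℤ), z t ω) ^ 2 := by
      intro T
      rw [← integral_const_mul]
      congr 1
      exact funext fun ω => by ring
    have hnn : ∀ T : ℕ, 0 ≤ ∫ ω, ((1 / (T : ℝ)) * ∑ t ∈ Finset.Icc (1 : ℤ) (T : ℤ), z t ω) ^ 2 :=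
      fun T => integral_nonneg fun ω => sq_nonneg _
    refine squeeze_zero' (Filter.Eventually.of_forall hnn) ?_
      (tendsto_const_div_atTop_nhds_zero_nat ((2 * (Lm : ℝ) + 1) * K * S ^ 2))
    filter_upwards [eventually_ge_atTop 1] with T hT
    rw [hfT]
    have hTpos : (0 : ℝ) < T := by exact_mod_cast hT
    calc (1 / (T : ℝ)) ^ 2 * ∫ ω, (∑ t ∈ Finset.Icc (1 : ℤ) (T : ℤ), z t ω) ^ 2
        ≤ (1 / (T : ℝ)) ^ 2 * ((T : ℝ) * (2 * (Lm : ℝ) + 1) * K * S ^ 2) :=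
          mul_le_mul_of_nonneg_left (main T) (by positivity)
      _ = (2 * (Lm : ℝ) + 1) * K * S ^ 2 / (T : ℝ) := by
          field_simp
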